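/- There exists a constant C > 0 such that for every integer B ≥ 2, every κ with 0 < κ < π/2, and either choice of sign, the Shannon entropy of x_± satisfies | s(x_±) − ( (1/2) log B + log 2 ) | ≤ C (log B)/√B. -/

import Mathlib

set_option maxHeartbeats 1000000

noncomputable section

/-- Shannon entropy of a vector (convention `0 · log 0 = 0`). -/
def shannonEnt {n : Type*} [Fintype n] (x : n → ℂ) : ℝ :=
  -∑ j, (‖x j‖ ^ 2 / ∑ i, ‖x i‖ ^ 2) * Real.log (‖x j‖ ^ 2 / ∑ i, ‖x i‖ ^ 2)

/-- The vector `x_±` (sign `ε = ±1`): first component `cos κ ± √(B − sin²κ)`,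
all other components `1`. -/
def xvec (B : ℕ) (κ ε : ℝ) : Fin B → ℂ := fun m =>
  if (m : ℕ) = 0 then
    ((Real.cos κ + ε * Real.sqrt ((B : ℝ) - Real.sin κ ^ 2) : ℝ) : ℂ)
  else 1

lemma sum_if_fin (B : ℕ) (hB : 2 ≤ B) (c d : ℝ) :
    ∑ m : Fin B, (if (m : ℕ) = 0 then c else d) = c + ((B:ℝ) - 1) * d := by
  haveI : NeZero B := ⟨by omega⟩
  have h : ∀ m : Fin B, (if (m : ℕ) = 0 then c else d)
      = (if m = (0 : Fin B) then c - d else 0) + d := by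
    intro m
    by_cases hm : m = 0
    · simp [hm]
    · have h2 : (m : ℕ) ≠ 0 := fun h => hm (Fin.ext h)
      simp [hm, h2]
  simp only [h]
  rw [Finset.sum_add_distrib, Finset.sum_ite_eq' Finset.univ (0 : Fin B), Finset.sum_const]
  simp [Finset.card_univ]
  ring

lemma shannon_eval (B : ℕ) (hB : 2 ≤ B) (r : ℝ) (hr : r ≠ 0) :
    shannonEnt (fun m : Fin B => if (m : ℕ) = 0 then (r : ℂ) else 1) =
      Real.log (r ^ 2 + ((B : ℝ) - 1)) -
        (r ^ 2 / (r ^ 2 + ((B : ℝ) - 1))) * Real.log (r ^ 2) := by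
  have hB1 : (1 : ℝ) ≤ (B : ℝ) - 1 := by
    have : (2 : ℝ) ≤ (B : ℝ) := by exact_mod_cast hB
    linarith
  have hr2 : 0 < r ^ 2 := by positivity
  set T : ℝ := r ^ 2 + ((B : ℝ) - 1) with hTdef
  have hT : 0 < T := by rw [hTdef]; linarith
  have hnorm : ∀ m : Fin B,
      ‖(if (m : ℕ) = 0 then (r : ℂ) else 1)‖ ^ 2 = if (m : ℕ) = 0 then r ^ 2 else 1 := by
    intro m
    by_cases hm : (m : ℕ) = 0
    · simp [hm, Complex.norm_real, sq_abs]
    · simp [hm]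
  have hsum : (∑ i : Fin B, (if ((i : Fin B) : ℕ) = 0 then r ^ 2 else (1:ℝ))) = T := by
    rw [sum_if_fin B hB, hTdef]; ring
  unfold shannonEnt
  simp only [hnorm, hsum]
  have hsum2 : (∑ j : Fin B,
      ((if (j : ℕ) = 0 then r ^ 2 else 1) / T) *
        Real.log ((if (j : ℕ) = 0 then r ^ 2 else 1) / T))
      = (r ^ 2 / T) * Real.log (r ^ 2 / T)
        + ((B : ℝ) - 1) * ((1 / T) * Real.log (1 / T)) := by
    rw [← sum_if_fin B hB ((r ^ 2 / T) * Real.log (r ^ 2 / T))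
      ((1 / T) * Real.log (1 / T))]
    apply Finset.sum_congr rfl
    intro m _
    by_cases hm : (m : ℕ) = 0 <;> simp [hm]
  rw [hsum2, Real.log_div (ne_of_gt hr2) (ne_of_gt hT), one_div,
    Real.log_inv]
  field_simp
  ring

lemma abs_log_near_one (y δ : ℝ) (h2 : 1/2 ≤ y) (hy : |y - 1| ≤ δ) :
    |Real.log y| ≤ 2 * δ := by
  have hy0 : 0 < y := by linarith
  have hδ : 0 ≤ δ := le_trans (abs_nonneg _) hy
  rcases le_or_gt 1 y with h1 | h1
  · rw [abs_of_nonneg (Real.log_nonneg h1)]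
    have h3 : y - 1 ≤ δ := by rwa [abs_of_nonneg (by linarith)] at hy
    linarith [Real.log_le_sub_one_of_pos hy0]
  · rw [abs_of_nonpos (Real.log_nonpos (le_of_lt hy0) (le_of_lt h1))]
    have hinv := Real.log_le_sub_one_of_pos (inv_pos.mpr hy0)
    rw [Real.log_inv] at hinv
    have hc : y * y⁻¹ = 1 := mul_inv_cancel₀ (ne_of_gt hy0)
    have h3 : y⁻¹ - 1 ≤ 2 * (1 - y) := by nlinarith
    have h4 : 1 - y ≤ δ := by
      have := abs_le.mp hy; linarith [this.1]
    linarith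

lemma est (B w : ℝ) (hB : 2 ≤ B) (hw : 0 < w)
    (ht : |w - B| ≤ 3 * Real.sqrt B) :
    |Real.log (w + (B - 1)) - w / (w + (B - 1)) * Real.log w -
      (1 / 2 * Real.log B + Real.log 2)| ≤ 200 * Real.log B / Real.sqrt B := by
  have hB0 : 0 < B := by linarith
  obtain ⟨sB, hsBdef⟩ : ∃ sB, sB = Real.sqrt B := ⟨_, rfl⟩
  rw [← hsBdef] at ht ⊢
  have hsB2 : sB ^ 2 = B := by rw [hsBdef]; exact Real.sq_sqrt (by linarith)
  have hsB1 : 1 ≤ sB := by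
    rw [hsBdef, show (1:ℝ) = Real.sqrt 1 by simp]
    exact Real.sqrt_le_sqrt (by linarith)
  have hsB0 : 0 < sB := lt_of_lt_of_le one_pos hsB1
  obtain ⟨S, hSdef⟩ : ∃ S, S = w + (B - 1) := ⟨_, rfl⟩
  rw [show w + (B - 1) = S from hSdef.symm]
  have hS1 : 1 ≤ S := by rw [hSdef]; linarith
  have hS0 : 0 < S := lt_of_lt_of_le one_pos hS1
  have hwS : w ≤ S := by rw [hSdef]; linarith
  have hp0 : 0 ≤ w / S := by positivity
  have hp1 : w / S ≤ 1 := by rw [div_le_one hS0]; exact hwS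
  have htu : w ≤ B + 3 * sB := by have := abs_le.mp ht; linarith [this.2]
  have htl : B - 3 * sB ≤ w := by have := abs_le.mp ht; linarith [this.1]
  have hlog2 : (0.6931471803 : ℝ) < Real.log 2 := Real.log_two_gt_d9
  have hlogB : Real.log 2 ≤ Real.log B := Real.log_le_log (by norm_num) hB
  have hlogB0 : 0 ≤ Real.log B := by linarith
  have hsBB : sB ≤ B := by nlinarith
  rcases le_or_gt B 100 with hBs | hBl
  · -- small case
    have hsB10 : sB ≤ 10 := by
      rw [hsBdef, show (10:ℝ) = Real.sqrt 100 by
        rw [show (100:ℝ) = 10^2 by norm_num, Real.sqrt_sq (by norm_num)]]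
      exact Real.sqrt_le_sqrt hBs
    have hw4 : w ≤ 4 * B := by linarith
    have hS5 : S ≤ 5 * B := by rw [hSdef]; linarith
    have hlogS0 : 0 ≤ Real.log S := Real.log_nonneg hS1
    have hlog5 : Real.log 5 ≤ 4 :=
      le_trans (Real.log_le_sub_one_of_pos (by norm_num)) (by norm_num)
    have hlog50 : 0 ≤ Real.log 5 := Real.log_nonneg (by norm_num)
    have hlogS : Real.log S ≤ Real.log 5 + Real.log B := by
      rw [← Real.log_mul (by norm_num) (ne_of_gt hB0)]
      exact Real.log_le_log hS0 hS5
    have hterm : |w / S * Real.log w| ≤ 1 + Real.log 5 + Real.log B := by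
      rcases le_or_gt w 1 with hw1 | hw1
      · have hlw : Real.log w ≤ 0 := Real.log_nonpos (le_of_lt hw) hw1
        rw [abs_of_nonpos (mul_nonpos_of_nonneg_of_nonpos hp0 hlw)]
        have hinv := Real.log_le_sub_one_of_pos (inv_pos.mpr hw)
        rw [Real.log_inv] at hinv
        have h1 : w / S * (w⁻¹ - 1) = (1 - w) / S := by
          field_simp
        have h2 : w / S * (-Real.log w) ≤ w / S * (w⁻¹ - 1) :=
          mul_le_mul_of_nonneg_left (by linarith) hp0
        have h3 : (1 - w) / S ≤ 1 - w := by
          apply div_le_self (by linarith) hS1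
        nlinarith
      · have hlw : 0 ≤ Real.log w := Real.log_nonneg (le_of_lt hw1)
        rw [abs_of_nonneg (mul_nonneg hp0 hlw)]
        have h4 : Real.log w ≤ Real.log 5 + Real.log B := by
          rw [← Real.log_mul (by norm_num) (ne_of_gt hB0)]
          exact Real.log_le_log hw (by linarith)
        nlinarith
    have hrhs : 20 * Real.log B ≤ 200 * Real.log B / sB := by
      rw [le_div_iff₀ hsB0]
      nlinarith [mul_nonneg hlogB0 (sub_nonneg.mpr hsB10)]
    have hterm' := abs_le.mp hterm
    refine le_trans ?_ hrhs
    rw [abs_le]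
    constructor <;> linarith [hterm'.1, hterm'.2]
  · -- large case
    have hsB10 : (10:ℝ) ≤ sB := by
      rw [hsBdef, show (10:ℝ) = Real.sqrt 100 by
        rw [show (100:ℝ) = 10^2 by norm_num, Real.sqrt_sq (by norm_num)]]
      exact Real.sqrt_le_sqrt (le_of_lt hBl)
    have hkey : 10 * sB ≤ B := by
      have h0 := mul_nonneg (sub_nonneg.mpr hsB10) (le_of_lt hsB0)
      nlinarith
    have hw7 : 7/10 * B ≤ w := by linarith
    have hw13 : w ≤ 13/10 * B := by linarith
    have hSB : B ≤ S := by rw [hSdef]; linarith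
    have h1 : |Real.log (S / (2*B))| ≤ 4 / sB := by
      have hh : |Real.log (S / (2*B))| ≤ 2 * (2 / sB) := by
        apply abs_log_near_one
        · rw [le_div_iff₀ (by positivity)]; linarith
        · have he : S / (2*B) - 1 = (S - 2*B) / (2*B) := by field_simp
          rw [he, abs_div, abs_of_pos (by positivity : (0:ℝ) < 2*B),
            div_le_div_iff₀ (by positivity) hsB0]
          have habs : |S - 2*B| ≤ 4 * sB := by
            rw [abs_le]; constructor <;> (rw [hSdef]) <;> linarith
          nlinarith [abs_nonneg (S - 2*B)]
      have : 2*(2/sB) = 4/sB := by ring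
      linarith
    have h2 : |Real.log (w / B)| ≤ 6 / sB := by
      have hh : |Real.log (w / B)| ≤ 2 * (3 / sB) := by
        apply abs_log_near_one
        · rw [le_div_iff₀ hB0]; linarith
        · have he : w / B - 1 = (w - B) / B := by field_simp
          rw [he, abs_div, abs_of_pos hB0, div_le_div_iff₀ hB0 hsB0]
          nlinarith [abs_nonneg (w - B)]
      have : 2*(3/sB) = 6/sB := by ring
      linarith
    have h3 : |1/2 - w/S| ≤ 2 / sB := by
      have he : 1/2 - w/S = (S - 2*w) / (2*S) := by field_simp
      rw [he, abs_div, abs_of_pos (by positivity : (0:ℝ) < 2*S),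
        div_le_div_iff₀ (by positivity) hsB0]
      have habs : |S - 2*w| ≤ 4 * sB := by
        rw [abs_le]; constructor <;> (rw [hSdef]) <;> linarith
      nlinarith [abs_nonneg (S - 2*w)]
    have hE : Real.log S - w/S * Real.log w - (1/2 * Real.log B + Real.log 2)
        = Real.log (S/(2*B)) - w/S * Real.log (w/B) + (1/2 - w/S) * Real.log B := by
      rw [Real.log_div (ne_of_gt hS0) (by positivity),
        Real.log_div (ne_of_gt hw) (ne_of_gt hB0),
        Real.log_mul (by norm_num) (ne_of_gt hB0)]
      ring
    have hpl : |w/S * Real.log (w/B)| ≤ 6 / sB := by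
      rw [abs_mul, abs_of_nonneg hp0]
      calc w/S * |Real.log (w/B)| ≤ 1 * (6 / sB) :=
            mul_le_mul hp1 h2 (abs_nonneg _) one_pos.le
        _ = 6 / sB := one_mul _
    have hql : |(1/2 - w/S) * Real.log B| ≤ 2/sB * Real.log B := by
      rw [abs_mul, abs_of_nonneg hlogB0]
      exact mul_le_mul_of_nonneg_right h3 hlogB0
    have hfin : 4/sB + 6/sB + 2/sB * Real.log B ≤ 200 * Real.log B / sB := by
      have he2 : 200 * Real.log B / sB - (4/sB + 6/sB + 2/sB * Real.log B)
          = (198 * Real.log B - 10) / sB := by field_simp; ring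
      have : 0 ≤ (198 * Real.log B - 10) / sB :=
        div_nonneg (by linarith) (le_of_lt hsB0)
      linarith
    have ha := abs_le.mp h1
    have hb := abs_le.mp hpl
    have hc := abs_le.mp hql
    rw [hE, abs_le]
    constructor <;> linarith [ha.1, ha.2, hb.1, hb.2, hc.1, hc.2]


lemma xfacts (B : ℕ) (hB : 2 ≤ B) (κ ε : ℝ) (hκ1 : 0 < κ) (hκ2 : κ < Real.pi / 2)
    (hε : ε = 1 ∨ ε = -1) :
    (Real.cos κ + ε * Real.sqrt ((B : ℝ) - Real.sin κ ^ 2)) ≠ 0 ∧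
      |(Real.cos κ + ε * Real.sqrt ((B : ℝ) - Real.sin κ ^ 2)) ^ 2 - (B : ℝ)|
        ≤ 3 * Real.sqrt B := by
  have hπ : 0 < Real.pi := Real.pi_pos
  have hBR : (2:ℝ) ≤ (B:ℝ) := by exact_mod_cast hB
  have pyth := Real.sin_sq_add_cos_sq κ
  have hsin : Real.sin κ ^ 2 ≤ 1 := Real.sin_sq_le_one κ
  have hsin0 : 0 ≤ Real.sin κ ^ 2 := sq_nonneg _
  have hsub : (0:ℝ) ≤ (B:ℝ) - Real.sin κ ^ 2 := by linarith
  set u := Real.sqrt ((B:ℝ) - Real.sin κ ^ 2) with hudef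
  have hu2 : u ^ 2 = (B:ℝ) - Real.sin κ ^ 2 := Real.sq_sqrt hsub
  have hu0 : 0 ≤ u := Real.sqrt_nonneg _
  have huB : u ≤ Real.sqrt B := Real.sqrt_le_sqrt (by linarith)
  have hsB1 : 1 ≤ Real.sqrt (B:ℝ) := by
    rw [show (1:ℝ) = Real.sqrt 1 by simp]
    exact Real.sqrt_le_sqrt (by linarith)
  have hcos0 : 0 ≤ Real.cos κ := Real.cos_nonneg_of_mem_Icc ⟨by linarith, le_of_lt hκ2⟩
  have hcos1 : Real.cos κ ≤ 1 := Real.cos_le_one κ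
  have hε2 : ε ^ 2 = 1 := by rcases hε with h | h <;> simp [h]
  constructor
  · intro h
    have h2 : (ε * u) ^ 2 = Real.cos κ ^ 2 := by
      have h3 : ε * u = -Real.cos κ := by linarith
      rw [h3]; ring
    have h4 : (ε * u) ^ 2 = u ^ 2 := by rw [mul_pow, hε2, one_mul]
    nlinarith
  · have hexp : (Real.cos κ + ε * u) ^ 2 - (B:ℝ)
        = Real.cos κ ^ 2 - Real.sin κ ^ 2 + 2 * ε * Real.cos κ * u := by
      have h5 : (Real.cos κ + ε * u) ^ 2
          = Real.cos κ ^ 2 + 2 * ε * Real.cos κ * u + ε ^ 2 * u ^ 2 := by ring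
      rw [h5, hε2, hu2]; ring
    rw [hexp, abs_le]
    rcases hε with h | h <;> subst h <;> constructor <;>
      nlinarith [mul_nonneg hcos0 hu0, mul_nonneg (sub_nonneg.2 hcos1) hu0,
        mul_nonneg (sub_nonneg.2 huB) hcos0]

/-- Uniformly in `κ ∈ (0, π/2)` and in the sign,
`s(x_±) = (1/2) log B + log 2 + O(log B / √B)`. -/
theorem shannon_entropy_xvec_asymptotic :
    ∃ C : ℝ, 0 < C ∧ ∀ B : ℕ, 2 ≤ B → ∀ κ : ℝ, 0 < κ → κ < Real.pi / 2 →
      ∀ ε : ℝ, ε = 1 ∨ ε = -1 →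
        |shannonEnt (xvec B κ ε) - ((1 / 2) * Real.log B + Real.log 2)| ≤
          C * Real.log B / Real.sqrt B := by
  refine ⟨200, by norm_num, ?_⟩
  intro B hB κ hκ1 hκ2 ε hε
  obtain ⟨ha0, habs⟩ := xfacts B hB κ ε hκ1 hκ2 hε
  have hBR : (2:ℝ) ≤ (B:ℝ) := by exact_mod_cast hB
  have hxeq : xvec B κ ε = (fun m : Fin B => if (m : ℕ) = 0 then
      ((Real.cos κ + ε * Real.sqrt ((B : ℝ) - Real.sin κ ^ 2) : ℝ) : ℂ) else 1) := rfl
  rw [hxeq, shannon_eval B hB _ ha0]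
  have hw : 0 < (Real.cos κ + ε * Real.sqrt ((B : ℝ) - Real.sin κ ^ 2)) ^ 2 :=
    pow_two_pos_of_ne_zero ha0
  exact est (B:ℝ) _ hBR hw habs

end
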